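/- There exists a constant C > 0 such that for all t ≥ 0 and every δ > 0, ∫₀ᵗ (1+t-s)^{-1/2} (1+s)^{-1/2} e^{-δ s} ds ≤ C δ^{-1} (1+t)^{-1/2}. -/

import Mathlib

open Real in
theorem stmt7 :
    ∃ C > 0, ∀ t : ℝ, 0 ≤ t → ∀ δ : ℝ, 0 < δ →
      (∫ s in (0:ℝ)..t, (1 + t - s) ^ (-(1:ℝ)/2) * (1 + s) ^ (-(1:ℝ)/2) * Real.exp (-δ * s))
        ≤ C * δ⁻¹ * (1 + t) ^ (-(1:ℝ)/2) := by
  refine ⟨1, one_pos, fun t ht δ hδ => ?_⟩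
  have ht1 : (0:ℝ) < 1 + t := by linarith
  -- bound integrand pointwise by (1+t)^(-1/2) * exp (-δ s)
  have hmono : (∫ s in (0:ℝ)..t, (1 + t - s) ^ (-(1:ℝ)/2) * (1 + s) ^ (-(1:ℝ)/2)
      * Real.exp (-δ * s))
      ≤ ∫ s in (0:ℝ)..t, (1 + t) ^ (-(1:ℝ)/2) * Real.exp (-δ * s) := by
    apply intervalIntegral.integral_mono_on ht
    · apply ContinuousOn.intervalIntegrable
      apply ContinuousOn.mul
      apply ContinuousOn.mul
      · apply ContinuousOn.rpow_const
        · fun_prop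
        · intro s hs
          rw [Set.uIcc_of_le ht] at hs
          left; nlinarith [hs.2]
      · apply ContinuousOn.rpow_const
        · fun_prop
        · intro s hs
          rw [Set.uIcc_of_le ht] at hs
          left; nlinarith [hs.1]
      · fun_prop
    · apply ContinuousOn.intervalIntegrable; fun_prop
    · intro s hs
      have h1 : (0:ℝ) < 1 + t - s := by nlinarith [hs.1, hs.2]
      have h2 : (0:ℝ) < 1 + s := by nlinarith [hs.1]
      have hprod : 1 + t ≤ (1 + t - s) * (1 + s) := by nlinarith [hs.1, hs.2]
      have key : (1 + t) ^ (-(1:ℝ)/2) ≥ ((1 + t - s) * (1 + s)) ^ (-(1:ℝ)/2) :=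
        Real.rpow_le_rpow_of_nonpos ht1 hprod (by norm_num)
      rw [Real.mul_rpow h1.le h2.le] at key
      exact mul_le_mul_of_nonneg_right key (Real.exp_nonneg _)
  refine hmono.trans ?_
  rw [intervalIntegral.integral_const_mul]
  have hexp : (∫ s in (0:ℝ)..t, Real.exp (-δ * s)) = (1 - Real.exp (-δ * t)) / δ := by
    have : ∀ s ∈ Set.uIcc (0:ℝ) t, HasDerivAt (fun x => -Real.exp (-δ * x) / δ)
        (Real.exp (-δ * s)) s := by
      intro s _
      have h := ((hasDerivAt_id s).const_mul (-δ)).exp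
      have h2 := (h.neg).div_const δ
      refine h2.congr_deriv ?_
      field_simp; rfl
    rw [intervalIntegral.integral_eq_sub_of_hasDerivAt this
      (by apply ContinuousOn.intervalIntegrable; fun_prop)]
    field_simp
    rw [mul_zero, neg_zero, Real.exp_zero]; ring
  rw [hexp]
  have hpow : (0:ℝ) < (1 + t) ^ (-(1:ℝ)/2) := Real.rpow_pos_of_pos ht1 _
  rw [one_mul, mul_comm ((1 + t) ^ (-(1:ℝ)/2))]
  apply mul_le_mul_of_nonneg_right _ hpow.le
  rw [div_le_iff₀ hδ, inv_mul_cancel₀ hδ.ne']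
  have := Real.exp_nonneg (-δ * t)
  linarith
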